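/- If f : X → Y is a finite-to-one, open, continuous surjection and X is quarter-stratifiable, then Y is quarter-stratifiable. -/

import Mathlib

/-- A topological space is quarter-stratifiable if there is a function `g : ℕ × X → τ`
assigning open sets such that `X = ⋃_{x} g n x` for every `n`, and whenever
`x ∈ g n (xs n)` for all `n`, the sequence `xs` converges to `x`. -/
def QuarterStratifiable (X : Type*) [TopologicalSpace X] : Prop :=
  ∃ g : ℕ → X → Set X,
    (∀ n x, IsOpen (g n x)) ∧
    (∀ n : ℕ, ∀ y : X, ∃ x : X, y ∈ g n x) ∧
    (∀ (x : X) (xs : ℕ → X), (∀ n, x ∈ g n (xs n)) →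
      Filter.Tendsto xs Filter.atTop (nhds x))

/-- If `f : X → Y` is a finite-to-one open continuous surjection and `X` is
quarter-stratifiable, then so is `Y`. -/
theorem quarterStratifiable_of_finiteToOne_openMap (X Y : Type*) [TopologicalSpace X]
    [TopologicalSpace Y] (hX : QuarterStratifiable X) (f : X → Y)
    (hf : Continuous f) (hopen : IsOpenMap f) (hsurj : Function.Surjective f)
    (hfin : ∀ y : Y, (f ⁻¹' {y}).Finite) :
    QuarterStratifiable Y := by
  classical
  obtain ⟨g, hg1, hg2, hg3⟩ := hX
  -- Uniform consequence of quarter-stratifiability: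
  have key : ∀ (x : X) (V : Set X), IsOpen V → x ∈ V →
      ∃ N, ∀ m ≥ N, ∀ x', x ∈ g m x' → x' ∈ V := by
    intro x V hV hxV
    by_contra h
    push_neg at h
    choose xs0 hxs0 using fun n => hg2 n x
    set xs : ℕ → X := fun m =>
      if hm : ∃ x', x ∈ g m x' ∧ x' ∉ V then hm.choose else xs0 m with hxs
    have hmemg : ∀ m, x ∈ g m (xs m) := by
      intro m
      simp only [hxs]
      split
      · exact (Exists.choose_spec ‹∃ x', x ∈ g m x' ∧ x' ∉ V›).1
      · exact hxs0 m
    have htend := hg3 x xs hmemg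
    have hev : ∀ᶠ m in Filter.atTop, xs m ∈ V := htend (hV.mem_nhds hxV)
    rw [Filter.eventually_atTop] at hev
    obtain ⟨N, hN⟩ := hev
    obtain ⟨m, hmN, x', hx'g, hx'V⟩ := h N
    have hm : ∃ x', x ∈ g m x' ∧ x' ∉ V := ⟨x', hx'g, hx'V⟩
    have : xs m ∉ V := by
      simp only [hxs]
      rw [dif_pos hm]
      exact hm.choose_spec.2
    exact this (hN m hmN)
  refine ⟨fun n y => ⋃ x ∈ f ⁻¹' {y}, f '' g n x, ?_, ?_, ?_⟩
  · intro n y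
    exact isOpen_biUnion fun x _ => hopen _ (hg1 n x)
  · intro n y'
    obtain ⟨x', hx'⟩ := hsurj y'
    obtain ⟨x, hx⟩ := hg2 n x'
    refine ⟨f x, Set.mem_biUnion ?_ ⟨x', hx, hx'⟩⟩
    simp
  · intro y ys hmemy
    have hsel : ∀ n, ∃ x, f x = ys n ∧ ∃ z, z ∈ g n x ∧ f z = y := by
      intro n
      have h := hmemy n
      simp only [Set.mem_iUnion, Set.mem_preimage, Set.mem_singleton_iff,
        Set.mem_image] at h
      obtain ⟨x, hx, z, hz, hfz⟩ := h
      exact ⟨x, hx, z, hz, hfz⟩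
    choose xs hxs zs hzs hfzs using hsel
    rw [tendsto_nhds]
    intro U hU hyU
    simp only [Filter.mem_atTop_sets, Set.mem_preimage]
    by_contra hcon
    push_neg at hcon
    have hS : {n | ys n ∉ U}.Infinite := by
      rw [Set.infinite_coe_iff.symm]
      rw [Set.infinite_coe_iff]
      apply Set.infinite_of_not_bddAbove
      rintro ⟨N, hN⟩
      obtain ⟨n, hnN, hn⟩ := hcon (N + 1)
      exact absurd (hN hn) (by omega)
    have hzfib : ∀ n, zs n ∈ f ⁻¹' {y} := fun n => by
      simp [hfzs n]
    have hpigeon : ∃ z ∈ f ⁻¹' {y}, {n | ys n ∉ U ∧ zs n = z}.Infinite := by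
      by_contra hc
      push_neg at hc
      have hsub : {n | ys n ∉ U} ⊆ ⋃ z ∈ f ⁻¹' {y}, {n | ys n ∉ U ∧ zs n = z} :=
        fun n hn => Set.mem_biUnion (hzfib n) ⟨hn, rfl⟩
      have hfinU : (⋃ z ∈ f ⁻¹' {y}, {n | ys n ∉ U ∧ zs n = z}).Finite :=
        (hfin y).biUnion fun z hz => hc z hz
      exact hS (hfinU.subset hsub)
    obtain ⟨z, hzf, hT⟩ := hpigeon
    have hzU : z ∈ f ⁻¹' U := by
      simp only [Set.mem_preimage, Set.mem_singleton_iff] at hzf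
      simp [Set.mem_preimage, hzf, hyU]
    obtain ⟨N, hN⟩ := key z (f ⁻¹' U) (hU.preimage hf) hzU
    obtain ⟨n, ⟨hnU, hzn⟩, hNn⟩ := hT.exists_gt N
    have : z ∈ g n (xs n) := hzn ▸ hzs n
    have hxU : xs n ∈ f ⁻¹' U := hN n (le_of_lt hNn) (xs n) this
    rw [Set.mem_preimage, hxs n] at hxU
    exact hnU hxU
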